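/- There exists an uncountable family (P_i)_{i∈I} of idempotent operators in B(H) such that no P_i is a compact operator and, for all i ≠ j, both products P_iP_j and P_jP_i are compact operators. (Equivalently: the Calkin algebra B(H)/K(H) has uncountably many pairwise orthogonal nonzero idempotents.) -/

import Mathlib

open Submodule Set
open scoped Classical

noncomputable section

namespace EOI

variable {H : Type*} [NormedAddCommGroup H] [InnerProductSpace ℂ H] [CompleteSpace H]

local notation "⟪" x ", " y "⟫" => @inner ℂ _ _ x y

lemma orthonormal_dist_sq {ι : Type*} {e : ι → H} (he : Orthonormal ℂ e) {i j : ι}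
    (h : i ≠ j) : dist (e i) (e j) ^ 2 = 2 := by
  rw [dist_eq_norm, @norm_sub_sq ℂ, he.1 i, he.1 j, he.2 h]
  norm_num

lemma orthonormal_one_le_dist {ι : Type*} {e : ι → H} (he : Orthonormal ℂ e) {i j : ι}
    (h : i ≠ j) : 1 ≤ dist (e i) (e j) := by
  have h2 := orthonormal_dist_sq he h
  nlinarith [dist_nonneg (x := e i) (y := e j)]

/-- the closed subspace spanned by `e '' A` -/
def V (e : ℕ → H) (A : Set ℕ) : Submodule ℂ H :=
  (Submodule.span ℂ (e '' A)).topologicalClosure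

instance (e : ℕ → H) (A : Set ℕ) : CompleteSpace (V e A) := by
  unfold V; infer_instance

instance (e : ℕ → H) (A : Set ℕ) : HasOrthogonalProjection (V e A) :=
  HasOrthogonalProjection.ofCompleteSpace _

/-- projection onto `V e A` viewed as operator on `H` -/
def P (e : ℕ → H) (A : Set ℕ) : H →L[ℂ] H :=
  (V e A).subtypeL.comp (orthogonalProjection (V e A))

lemma P_apply (e : ℕ → H) (A : Set ℕ) (x : H) :
    P e A x = (orthogonalProjection (V e A) x : H) := rfl

lemma P_mem (e : ℕ → H) (A : Set ℕ) (x : H) : P e A x ∈ V e A := by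
  rw [P_apply]; exact SetLike.coe_mem _

lemma P_eq_self (e : ℕ → H) (A : Set ℕ) {x : H} (hx : x ∈ V e A) : P e A x = x := by
  rw [P_apply]; exact (V e A).starProjection_eq_self_iff.2 hx

lemma P_eq_zero (e : ℕ → H) (A : Set ℕ) {x : H} (hx : x ∈ (V e A)ᗮ) : P e A x = 0 := by
  rw [P_apply]
  rw [show orthogonalProjection (V e A) x = 0 from orthogonalProjection_eq_zero_iff.2 hx]
  simp

lemma mem_orthogonal_V {e : ℕ → H} (he : Orthonormal ℂ e) {n : ℕ} {A : Set ℕ}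
    (hn : n ∉ A) : e n ∈ (V e A)ᗮ := by
  have h1 : e n ∈ (Submodule.span ℂ (e '' A))ᗮ := by
    rw [Submodule.mem_orthogonal]
    intro u hu
    induction hu using Submodule.span_induction with
    | mem u hu =>
      obtain ⟨m, hm, rfl⟩ := hu
      exact he.2 (fun h => hn (h ▸ hm))
    | zero => simp
    | add u v _ _ hu hv => simp [inner_add_left, hu, hv]
    | smul c u _ hu => simp [inner_smul_left, hu]
  have h2 : V e A ≤ (Submodule.span ℂ (e '' A))ᗮᗮ :=
    Submodule.topologicalClosure_minimal _ (Submodule.le_orthogonal_orthogonal _)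
      (Submodule.isClosed_orthogonal _)
  exact (Submodule.orthogonal_le h2) (Submodule.le_orthogonal_orthogonal _ h1)

lemma mem_V {e : ℕ → H} {n : ℕ} {A : Set ℕ} (hn : n ∈ A) : e n ∈ V e A :=
  (Submodule.le_topologicalClosure _) (Submodule.subset_span ⟨n, hn, rfl⟩)

lemma P_basis {e : ℕ → H} (he : Orthonormal ℂ e) (A : Set ℕ) (n : ℕ) :
    P e A (e n) = if n ∈ A then e n else 0 := by
  split_ifs with h
  · exact P_eq_self e A (mem_V h)
  · exact P_eq_zero e A (mem_orthogonal_V he h)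

lemma P_idem (e : ℕ → H) (A : Set ℕ) : P e A * P e A = P e A := by
  ext x
  exact P_eq_self e A (P_mem e A x)

lemma P_comp {e : ℕ → H} (he : Orthonormal ℂ e)
    (hd : Dense ((Submodule.span ℂ (Set.range e) : Submodule ℂ H) : Set H))
    (A B : Set ℕ) : P e A * P e B = P e (A ∩ B) := by
  refine ContinuousLinearMap.ext_on hd ?_
  rintro x ⟨n, rfl⟩
  show P e A (P e B (e n)) = P e (A ∩ B) (e n)
  rw [P_basis he, P_basis he]
  by_cases hB : n ∈ B
  · rw [if_pos hB, P_basis he]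
    by_cases hA : n ∈ A
    · rw [if_pos hA, if_pos ⟨hA, hB⟩]
    · rw [if_neg hA, if_neg (fun h => hA h.1)]
  · rw [if_neg hB, if_neg (fun h => hB h.2), map_zero]

lemma P_finite_compact (e : ℕ → H) {A : Set ℕ} (hA : A.Finite) :
    IsCompactOperator (P e A) := by
  have hW : FiniteDimensional ℂ (Submodule.span ℂ (e '' A)) :=
    FiniteDimensional.span_of_finite ℂ (hA.image e)
  have hVW : V e A = Submodule.span ℂ (e '' A) := by
    apply SetLike.ext'
    rw [V, Submodule.topologicalClosure_coe,
      IsClosed.closure_eq (Submodule.closed_of_finiteDimensional _)]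
  have hV : FiniteDimensional ℂ (V e A) := hVW ▸ hW
  haveI : ProperSpace (V e A) := FiniteDimensional.proper ℂ (V e A)
  refine ⟨Subtype.val '' Metric.closedBall (0 : V e A) ‖P e A‖, ?_, ?_⟩
  · exact (isCompact_closedBall _ _).image continuous_subtype_val
  · refine Filter.mem_of_superset (Metric.closedBall_mem_nhds 0 one_pos) ?_
    intro x hx
    simp only [Metric.mem_closedBall, dist_zero_right] at hx
    refine ⟨⟨P e A x, P_mem e A x⟩, ?_, rfl⟩
    simp only [Metric.mem_closedBall, dist_zero_right, Submodule.norm_coe]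
    calc ‖P e A x‖ ≤ ‖P e A‖ * ‖x‖ := (P e A).le_opNorm x
    _ ≤ ‖P e A‖ := mul_le_of_le_one_right (norm_nonneg _) hx

lemma P_infinite_not_compact {e : ℕ → H} (he : Orthonormal ℂ e) {A : Set ℕ}
    (hA : A.Infinite) : ¬ IsCompactOperator (P e A) := by
  intro hc
  obtain ⟨K, hK, hKmem⟩ := hc
  obtain ⟨ε, hε, hball⟩ := Metric.mem_nhds_iff.1 hKmem
  set r : ℝ := ε / 2 with hr
  have hrpos : 0 < r := by positivity
  set a : ℕ ↪ A := hA.natEmbedding _ with ha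
  set y : ℕ → H := fun k => ((r : ℂ)) • e (a k) with hy
  have hyK : ∀ k, y k ∈ K := by
    intro k
    have hmem : e (a k) ∈ V e A := mem_V (a k).2
    have hx : y k ∈ Metric.ball (0 : H) ε := by
      simp only [hy, Metric.mem_ball, dist_zero_right, norm_smul, he.1 (a k), mul_one,
        Complex.norm_real, Real.norm_eq_abs, abs_of_pos hrpos]
      linarith
    have := hball hx
    rwa [Set.mem_preimage, P_eq_self e A (Submodule.smul_mem _ _ hmem)] at this
  obtain ⟨x0, _, φ, hφ, hconv⟩ := hK.tendsto_subseq hyK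
  have hcauchy := hconv.cauchySeq
  obtain ⟨N, hN⟩ := Metric.cauchySeq_iff.1 hcauchy r hrpos
  have hne : (a (φ (N + 1)) : ℕ) ≠ (a (φ N) : ℕ) := by
    intro h
    have := hφ.injective (a.injective (Subtype.coe_injective h))
    omega
  have h1 : 1 ≤ dist (e (a (φ (N + 1)))) (e (a (φ N))) := orthonormal_one_le_dist he hne
  have hdist : r ≤ dist (y (φ (N + 1))) (y (φ N)) := by
    have : dist (y (φ (N + 1))) (y (φ N)) = r * dist (e (a (φ (N + 1)))) (e (a (φ N))) := by
      simp only [hy, dist_smul₀, Complex.norm_real, Real.norm_eq_abs, abs_of_pos hrpos]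
    rw [this]
    nlinarith
  have := hN (N + 1) (by omega) N (le_refl N)
  simp only [Function.comp] at this
  linarith

/-! ### Combinatorics: an almost disjoint family -/

/-- prefix list of `f` of length `n` -/
def L (f : ℕ → Bool) (n : ℕ) : List Bool := List.ofFn (fun i : Fin n => f i)

lemma L_injective (f : ℕ → Bool) : Function.Injective (L f) := fun n m h => by
  simpa [L] using congrArg List.length h

lemma L_inter {f g : ℕ → Bool} {k : ℕ} (hk : f k ≠ g k) :
    Set.range (L f) ∩ Set.range (L g) ⊆ L f '' Set.Iic k := by
  rintro x ⟨⟨n, rfl⟩, ⟨m, hm⟩⟩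
  have hnm : m = n := by simpa [L] using congrArg List.length hm
  subst hnm
  refine ⟨m, ?_, rfl⟩
  simp only [Set.mem_Iic]
  by_contra hn
  push_neg at hn
  apply hk
  have h1 : (L f m)[k]? = some (f k) := by simp [L, List.getElem?_ofFn, hn]
  have h2 : (L g m)[k]? = some (g k) := by simp [L, List.getElem?_ofFn, hn]
  rw [← hm, h2] at h1
  exact (Option.some_injective _ h1).symm

/-- the almost-disjoint family of subsets of `ℕ` -/
def A (f : ℕ → Bool) : Set ℕ := Encodable.encode '' Set.range (L f)

lemma A_infinite (f : ℕ → Bool) : (A f).Infinite :=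
  (Set.infinite_range_of_injective (L_injective f)).image
    (Encodable.encode_injective.injOn)

lemma A_inter_finite {f g : ℕ → Bool} (h : f ≠ g) : (A f ∩ A g).Finite := by
  rw [A, A, ← Set.image_inter Encodable.encode_injective]
  obtain ⟨k, hk⟩ := Function.ne_iff.1 h
  exact ((((Set.finite_Iic k).image (L f)).subset (L_inter hk)).image _)

/-! ### A countable orthonormal family with dense span -/

lemma exists_orthonormal_dense [TopologicalSpace.SeparableSpace H]
    (hinf : ¬ FiniteDimensional ℂ H) :
    ∃ e : ℕ → H, Orthonormal ℂ e ∧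
      Dense ((Submodule.span ℂ (Set.range e) : Submodule ℂ H) : Set H) := by
  obtain ⟨w, b, hw⟩ := exists_hilbertBasis ℂ H
  have hb : Orthonormal ℂ (⇑b) := b.orthonormal
  have hcount : Countable w := by
    have hdj : Pairwise (Function.onFun Disjoint fun i : w => Metric.ball (b i) (1/2)) := by
      intro i j hij
      apply Metric.ball_disjoint_ball
      have h1 := orthonormal_one_le_dist hb hij
      have : (1:ℝ)/2 + 1/2 = 1 := by norm_num
      rw [this]
      exact h1
    exact hdj.countable_of_isOpen_disjoint (fun i => Metric.isOpen_ball)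
      (fun i => Metric.nonempty_ball.2 (by norm_num))
  have hinf' : Infinite w := by
    by_contra hfin
    rw [not_infinite_iff_finite] at hfin
    have hWfd : FiniteDimensional ℂ (Submodule.span ℂ (Set.range ⇑b)) :=
      FiniteDimensional.span_of_finite ℂ (Set.finite_range ⇑b)
    have hclosed := Submodule.closed_of_finiteDimensional
      (Submodule.span ℂ (Set.range ⇑b))
    have htop := b.dense_span
    have hspan : (Submodule.span ℂ (Set.range ⇑b)) = ⊤ := by
      rw [← htop]
      exact (SetLike.ext' (by rw [Submodule.topologicalClosure_coe, hclosed.closure_eq])).symm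
    rw [hspan] at hWfd
    exact hinf (Submodule.topEquiv.finiteDimensional)
  haveI := hcount
  haveI := hinf'
  obtain ⟨d⟩ := nonempty_denumerable ↥w
  refine ⟨fun n => b ((Denumerable.eqv ↥w).symm n), hb.comp _ (Equiv.injective _), ?_⟩
  have hr : Set.range (⇑b ∘ (Denumerable.eqv ↥w).symm) = Set.range ⇑b :=
    Function.Surjective.range_comp (Equiv.surjective _) ⇑b
  rw [dense_iff_closure_eq]
  have heq : closure ((Submodule.span ℂ
        (Set.range fun n => b ((Denumerable.eqv ↥w).symm n)) : Submodule ℂ H) : Set H)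
      = ((Submodule.span ℂ (Set.range ⇑b)).topologicalClosure : Set H) := by
    rw [Submodule.topologicalClosure_coe,
      show (Set.range fun n => b ((Denumerable.eqv ↥w).symm n)) = Set.range ⇑b from hr]
  rw [heq, b.dense_span, Submodule.top_coe]

end EOI


end

/-- Let `H` be a complex separable infinite-dimensional Hilbert space. There
exists an uncountable family `(P_i)` of idempotent operators in `B(H)` such that no `P_i` is
compact and, for `i ≠ j`, both `P_iP_j` and `P_jP_i` are compact (i.e. the Calkin algebra has
uncountably many pairwise orthogonal nonzero idempotents). -/
theorem exists_uncountable_essentially_orthogonal_idempotents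
    {H : Type*} [NormedAddCommGroup H] [InnerProductSpace ℂ H] [CompleteSpace H]
    [TopologicalSpace.SeparableSpace H] (hinf : ¬ FiniteDimensional ℂ H) :
    ∃ (ι : Type) (P : ι → (H →L[ℂ] H)), ¬ Countable ι ∧
      (∀ i, P i * P i = P i) ∧
      (∀ i, ¬ IsCompactOperator (P i)) ∧
      (∀ i j, i ≠ j → IsCompactOperator ⇑(P i * P j) ∧ IsCompactOperator ⇑(P j * P i)) := by
  classical
  obtain ⟨e, he, hd⟩ := EOI.exists_orthonormal_dense hinf
  refine ⟨ℕ → Bool, fun f => EOI.P e (EOI.A f), ?_, fun f => EOI.P_idem e _,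
    fun f => EOI.P_infinite_not_compact he (EOI.A_infinite f), ?_⟩
  · intro hc
    obtain ⟨u, hu⟩ := Countable.exists_injective_nat (ℕ → Bool)
    have hmem : Function.Injective (fun s : Set ℕ => fun n => decide (n ∈ s)) := by
      intro s t h
      ext n
      have := congrFun h n
      simpa using this
    exact Function.cantor_injective (fun s : Set ℕ => u (fun n => decide (n ∈ s)))
      (hu.comp hmem)
  · intro f g hfg
    constructor
    · rw [EOI.P_comp he hd (EOI.A f) (EOI.A g)]
      exact EOI.P_finite_compact e (EOI.A_inter_finite hfg)
    · rw [EOI.P_comp he hd (EOI.A g) (EOI.A f)]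
      exact EOI.P_finite_compact e (EOI.A_inter_finite (Ne.symm hfg))
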